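/- Let γ > 0 with γ ≠ 1 and let a ∈ (0, π). Then there exists η ∈ (0,1) such that (sin(η(π-a)) / sin(ηπ))² = ((γ+1)/(γ-1))². -/

import Mathlib

open Real

theorem singularity_exponent_exists (γ a : ℝ) (hγ : 0 < γ) (hγ1 : γ ≠ 1)
    (ha : a ∈ Set.Ioo (0:ℝ) π) :
    ∃ η ∈ Set.Ioo (0:ℝ) 1,
      (Real.sin (η * (π - a)) / Real.sin (η * π)) ^ 2 = ((γ + 1) / (γ - 1)) ^ 2 := by
  obtain ⟨ha0, haπ⟩ := ha
  set c : ℝ := ((γ + 1) / (γ - 1)) ^ 2 with hc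
  have hγ1' : γ - 1 ≠ 0 := sub_ne_zero.mpr hγ1
  have hc1 : 1 < c := by
    rw [hc, div_pow, lt_div_iff₀ (by positivity)]
    nlinarith [sq_nonneg (γ - 1)]
  set g : ℝ → ℝ := fun η => Real.sin (η * (π - a)) ^ 2 - c * Real.sin (η * π) ^ 2 with hg
  have hgc : Continuous g := by fun_prop
  have hghalf : g (1 / 2) < 0 := by
    have h2 : Real.sin ((1 / 2 : ℝ) * π) = 1 := by
      rw [show (1 / 2 : ℝ) * π = π / 2 by ring, Real.sin_pi_div_two]
    simp only [hg, h2]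
    nlinarith [Real.sin_sq_le_one ((1 / 2 : ℝ) * (π - a))]
  have hg1 : 0 < g 1 := by
    simp only [hg, one_mul, Real.sin_pi, Real.sin_pi_sub]
    have := Real.sin_pos_of_pos_of_lt_pi ha0 haπ
    nlinarith
  have hmem : (0 : ℝ) ∈ Set.Ioo (g (1 / 2)) (g 1) := ⟨hghalf, hg1⟩
  obtain ⟨η, hη, hgη⟩ :=
    intermediate_value_Ioo (by norm_num : (1 / 2 : ℝ) ≤ 1) hgc.continuousOn hmem
  have hη0 : (0 : ℝ) < η := by linarith [hη.1]
  have hη1 : η < 1 := hη.2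
  have hsin : 0 < Real.sin (η * π) := by
    apply Real.sin_pos_of_pos_of_lt_pi
    · positivity
    · nlinarith [pi_pos]
  refine ⟨η, ⟨hη0, hη1⟩, ?_⟩
  have hgη' : Real.sin (η * (π - a)) ^ 2 = c * Real.sin (η * π) ^ 2 := by
    have : g η = 0 := hgη
    simp only [hg] at this
    linarith
  rw [div_pow, hgη', hc]
  field_simp
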